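/- For n ≥ 5, the wheel graph W_{n+1} (a cycle C_n plus a universal hub vertex) has b-chromatic number 4. -/

import Mathlib

/-- A b-coloring of `G` with `k` colors: a proper coloring such that every color class
contains a vertex adjacent to at least one vertex of every other color class. -/
def IsBColoring {V : Type*} (G : SimpleGraph V) (k : ℕ) (c : V → Fin k) : Prop :=
  (∀ u v, G.Adj u v → c u ≠ c v) ∧
  ∀ i : Fin k, ∃ v, c v = i ∧ ∀ j : Fin k, j ≠ i → ∃ w, G.Adj v w ∧ c w = j

/-- The b-chromatic number of `G`: the largest `k` admitting a b-coloring. -/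
noncomputable def bChromatic {V : Type*} (G : SimpleGraph V) : ℕ :=
  sSup {k | ∃ c : V → Fin k, IsBColoring G k c}

/-- The wheel graph $W_{n+1}$: the cycle $C_n$ (on `some i`) plus a universal hub `none`. -/
def wheelGraph (n : ℕ) : SimpleGraph (Option (Fin n)) where
  Adj x y :=
    match x, y with
    | none, none => False
    | none, some _ => True
    | some _, none => True
    | some a, some b => (SimpleGraph.cycleGraph n).Adj a b
  symm := by
    constructor
    rintro (_ | a) (_ | b) h <;> first | exact h | trivial | exact (SimpleGraph.cycleGraph n).adj_symm h
  loopless := by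
    constructor
    rintro (_ | a) h
    · exact h
    · exact (SimpleGraph.cycleGraph n).irrefl h

lemma fin_sub_val_one {n : ℕ} (hn : 2 ≤ n) (a b : Fin n) :
    (a - b).val = 1 ↔ a.val = (b.val + 1) % n := by
  have ha := a.isLt; have hb := b.isLt
  rw [Fin.sub_def]
  simp only []
  have h1 : (n - b.val + a.val) % n =
      if n - b.val + a.val < n then n - b.val + a.val else n - b.val + a.val - n := by
    split
    · exact Nat.mod_eq_of_lt ‹_›
    · rw [Nat.mod_eq_sub_mod (by omega), Nat.mod_eq_of_lt (by omega)]
  have h2 : (b.val + 1) % n = if b.val + 1 < n then b.val + 1 else 0 := by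
    split
    · exact Nat.mod_eq_of_lt ‹_›
    · have : b.val + 1 = n := by omega
      simp [this]
  rw [h1, h2]
  split <;> split <;> omega

lemma cycle_adj_iff {n : ℕ} (hn : 5 ≤ n) (a b : Fin n) :
    (SimpleGraph.cycleGraph n).Adj a b ↔
      a.val = (b.val + 1) % n ∨ b.val = (a.val + 1) % n := by
  rw [SimpleGraph.cycleGraph_adj', fin_sub_val_one (by omega), fin_sub_val_one (by omega)]

def rimColor : ℕ → Fin 4
  | 0 => 0
  | 1 => 1
  | 2 => 2
  | 3 => 0
  | (k+4) => if k % 2 = 0 then 1 else 2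

lemma rimColor_ne_three (i : ℕ) : rimColor i ≠ 3 := by
  match i with
  | 0 | 1 | 2 | 3 => decide
  | k+4 =>
    simp only [rimColor]
    split <;> decide

lemma rimColor_succ {n : ℕ} (hn : 5 ≤ n) (a : ℕ) (ha : a < n) :
    rimColor a ≠ rimColor ((a + 1) % n) := by
  rcases lt_or_eq_of_le (Nat.succ_le_of_lt ha) with h | h
  · rw [Nat.mod_eq_of_lt h]
    match a with
    | 0 | 1 | 2 | 3 => decide
    | k+4 =>
      show rimColor (k+4) ≠ rimColor ((k+1)+4)
      simp only [rimColor]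
      rcases Nat.mod_two_eq_zero_or_one k with h2 | h2 <;>
        have h3 : (k+1) % 2 = 1 - k % 2 := by omega
      all_goals simp [h2, h3]
  · rw [show a + 1 = n from h, Nat.mod_self]
    have : 4 ≤ a := by omega
    obtain ⟨k, rfl⟩ : ∃ k, a = k + 4 := ⟨a - 4, by omega⟩
    simp only [rimColor]
    split <;> decide

def wheelColor (n : ℕ) : Option (Fin n) → Fin 4
  | none => 3
  | some a => rimColor a.val

lemma wheel_bcoloring {n : ℕ} (hn : 5 ≤ n) :
    IsBColoring (wheelGraph n) 4 (wheelColor n) := by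
  constructor
  · rintro (_ | a) (_ | b) h
    · exact h.elim
    · exact fun he => rimColor_ne_three _ he.symm
    · exact rimColor_ne_three _
    · have h' := (cycle_adj_iff hn a b).mp h
      show rimColor a.val ≠ rimColor b.val
      rcases h' with h' | h'
      · rw [h']
        exact (rimColor_succ hn b.val b.isLt).symm
      · rw [h']
        exact rimColor_succ hn a.val a.isLt
  · intro i
    fin_cases i
    · -- color 0 : vertex 3
      refine ⟨some ⟨3, by omega⟩, rfl, ?_⟩
      intro j hj
      fin_cases j
      · exact absurd rfl hj
      · exact ⟨some ⟨4, by omega⟩,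
          (cycle_adj_iff hn _ _).mpr (Or.inr (Nat.mod_eq_of_lt (by omega)).symm), rfl⟩
      · exact ⟨some ⟨2, by omega⟩,
          (cycle_adj_iff hn _ _).mpr (Or.inl (Nat.mod_eq_of_lt (by omega)).symm), rfl⟩
      · exact ⟨none, trivial, rfl⟩
    · -- color 1 : vertex 1
      refine ⟨some ⟨1, by omega⟩, rfl, ?_⟩
      intro j hj
      fin_cases j
      · exact ⟨some ⟨0, by omega⟩,
          (cycle_adj_iff hn _ _).mpr (Or.inl (Nat.mod_eq_of_lt (by omega)).symm), rfl⟩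
      · exact absurd rfl hj
      · exact ⟨some ⟨2, by omega⟩,
          (cycle_adj_iff hn _ _).mpr (Or.inr (Nat.mod_eq_of_lt (by omega)).symm), rfl⟩
      · exact ⟨none, trivial, rfl⟩
    · -- color 2 : vertex 2
      refine ⟨some ⟨2, by omega⟩, rfl, ?_⟩
      intro j hj
      fin_cases j
      · exact ⟨some ⟨3, by omega⟩,
          (cycle_adj_iff hn _ _).mpr (Or.inr (Nat.mod_eq_of_lt (by omega)).symm), rfl⟩
      · exact ⟨some ⟨1, by omega⟩,
          (cycle_adj_iff hn _ _).mpr (Or.inl (Nat.mod_eq_of_lt (by omega)).symm), rfl⟩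
      · exact absurd rfl hj
      · exact ⟨none, trivial, rfl⟩
    · -- color 3 : hub
      refine ⟨none, rfl, ?_⟩
      intro j hj
      fin_cases j
      · exact ⟨some ⟨0, by omega⟩, trivial, rfl⟩
      · exact ⟨some ⟨1, by omega⟩, trivial, rfl⟩
      · exact ⟨some ⟨2, by omega⟩, trivial, rfl⟩
      · exact absurd rfl hj

lemma wheel_upper {n : ℕ} (hn : 5 ≤ n) (k : ℕ)
    (hk : ∃ c : Option (Fin n) → Fin k, IsBColoring (wheelGraph n) k c) : k ≤ 4 := by
  by_contra hk4
  push_neg at hk4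
  have hk5 : 5 ≤ k := hk4
  obtain ⟨c, hp, hb⟩ := hk
  set i0 : Fin k := c none with hi0
  -- pick a color i ≠ i0
  have hk0 : 0 < k := by omega
  obtain ⟨i, hii0⟩ : ∃ i : Fin k, i ≠ i0 := by
    rcases eq_or_ne (⟨0, by omega⟩ : Fin k) i0 with h | h
    · exact ⟨⟨1, by omega⟩, by rw [← h]; simp [Fin.ext_iff]⟩
    · exact ⟨_, h⟩
  obtain ⟨v, hcv, hwit⟩ := hb i
  -- v is a rim vertex
  obtain ⟨a, rfl⟩ : ∃ a : Fin n, v = some a := by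
    cases v with
    | none => exact absurd (hcv.symm.trans hi0.symm) hii0
    | some a => exact ⟨a, rfl⟩
  -- the set of colors needing rim witnesses
  set T : Finset (Fin k) := (Finset.univ.erase i).erase i0 with hT
  have hmem0 : i0 ∈ Finset.univ.erase i :=
    Finset.mem_erase.mpr ⟨Ne.symm hii0, Finset.mem_univ i0⟩
  have hTcard : T.card = k - 2 := by
    rw [hT, Finset.card_erase_of_mem hmem0, Finset.card_erase_of_mem (Finset.mem_univ i),
      Finset.card_univ, Fintype.card_fin]
    omega
  have hw : ∀ j : Fin k, ∃ b : Fin n,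
      j ∈ T → (SimpleGraph.cycleGraph n).Adj a b ∧ c (some b) = j := by
    intro j
    by_cases hj : j ∈ T
    · have hji0 : j ≠ i0 := (Finset.mem_erase.mp hj).1
      have hji : j ≠ i := (Finset.mem_erase.mp (Finset.mem_erase.mp hj).2).1
      obtain ⟨w, hadj, hcw⟩ := hwit j hji
      cases w with
      | none => exact absurd (hi0.trans hcw) (Ne.symm hji0)
      | some b => exact ⟨b, fun _ => ⟨hadj, hcw⟩⟩
    · exact ⟨⟨0, by omega⟩, fun h => absurd h hj⟩
  choose F hF using hw
  -- all witnesses lie in a 2-element set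
  set p : ℕ := if a.val = 0 then n - 1 else a.val - 1 with hpd
  set s : ℕ := (a.val + 1) % n with hsd
  have hmem : ∀ j ∈ T, (F j).val ∈ ({p, s} : Finset ℕ) := by
    intro j hj
    obtain ⟨hadj, _⟩ := hF j hj
    rw [cycle_adj_iff hn] at hadj
    have hb1 := (F j).isLt
    have ha1 := a.isLt
    simp only [Finset.mem_insert, Finset.mem_singleton]
    rcases hadj with h | h
    · left
      have h2 : ((F j).val + 1) % n = if (F j).val + 1 < n then (F j).val + 1 else 0 := by
        split
        · exact Nat.mod_eq_of_lt ‹_›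
        · have : (F j).val + 1 = n := by omega
          simp [this]
      rw [h2] at h
      rw [hpd]
      split at h <;> split <;> omega
    · right
      rw [hsd]
      exact h
  have hinj : Set.InjOn (fun j => (F j).val) T := by
    intro j1 h1 j2 h2 he
    have e1 := (hF j1 h1).2
    have e2 := (hF j2 h2).2
    rw [← e1, ← e2]
    congr 1
    exact congrArg some (Fin.ext he)
  have hle := Finset.card_le_card_of_injOn (fun j => (F j).val) hmem hinj
  have : ({p, s} : Finset ℕ).card ≤ 2 := Finset.card_insert_le _ _ |>.trans (by simp)
  omega


/-- For $n ≥ 5$, the wheel $W_{n+1}$ has b-chromatic number 4. -/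
theorem bChromatic_wheelGraph (n : ℕ) (hn : 5 ≤ n) :
    bChromatic (wheelGraph n) = 4 := by
  have hmem : 4 ∈ {k | ∃ c : Option (Fin n) → Fin k, IsBColoring (wheelGraph n) k c} :=
    ⟨wheelColor n, wheel_bcoloring hn⟩
  have hub : ∀ k ∈ {k | ∃ c : Option (Fin n) → Fin k, IsBColoring (wheelGraph n) k c},
      k ≤ 4 := fun k hk => wheel_upper hn k hk
  exact le_antisymm (csSup_le ⟨4, hmem⟩ hub) (le_csSup ⟨4, hub⟩ hmem)
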